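/- Let d ≥ 1, H ∈ ℕ, and let μ_src and μ_tgt be Borel probability measures on ℝ^d with finite second moments. Let π⋆_0,…,π⋆_H : ℝ^d → ℝ^d be measurable maps feasible for transporting μ_src to μ_tgt whose dynamic cost equals W₂²(μ_src, μ_tgt). Define μ⋆_h := (π̄⋆_{h−1}, π̄⋆_h)_# μ_src for h = 0,…,H (with π̄⋆_{−1} := id). Then (μ⋆_0,…,μ⋆_H) is feasible for the dynamic primal LP with source μ_src and target μ_tgt, and its cost equals W₂²(μ_src, μ_tgt), so it is an optimal solution. -/

import Mathlib

open MeasureTheory ENNReal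

/-- The squared Wasserstein-2 distance. -/
noncomputable def W2sq {d : ℕ} (μ ν : Measure (EuclideanSpace ℝ (Fin d))) : ℝ≥0∞ :=
  ⨅ (γ : Measure (EuclideanSpace ℝ (Fin d) × EuclideanSpace ℝ (Fin d)))
    (_ : IsProbabilityMeasure γ ∧ γ.map Prod.fst = μ ∧ γ.map Prod.snd = ν),
      2⁻¹ * ∫⁻ p, (‖p.1 - p.2‖₊ : ℝ≥0∞) ^ 2 ∂γ

/-- `trajComp π h = π̄_{h-1} = π_{h-1} ∘ ⋯ ∘ π_0`, with `trajComp π 0 = π̄_{-1} = id`. -/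
def trajComp {α : Type*} (π : ℕ → α → α) : ℕ → α → α
  | 0 => id
  | n + 1 => π n ∘ trajComp π n

/-- Feasibility for the dynamic primal LP with horizon `H`, source `μsrc`, target `μtgt`. -/
def LPfeasible {d : ℕ} (H : ℕ) (μsrc μtgt : Measure (EuclideanSpace ℝ (Fin d)))
    (μ : Fin (H + 1) → Measure (EuclideanSpace ℝ (Fin d) × EuclideanSpace ℝ (Fin d))) : Prop :=
  (∀ h, IsProbabilityMeasure (μ h)) ∧
  (μ 0).map Prod.fst = μsrc ∧
  (∀ h : Fin H, (μ h.castSucc).map Prod.snd = (μ h.succ).map Prod.fst) ∧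
  (μ (Fin.last H)).map Prod.snd = μtgt

/-- The cost of a family in the dynamic primal LP: `((H+1)/2) Σ_h ∫ ‖x-y‖² dμ_h`. -/
noncomputable def LPcost {d : ℕ} (H : ℕ)
    (μ : Fin (H + 1) → Measure (EuclideanSpace ℝ (Fin d) × EuclideanSpace ℝ (Fin d))) : ℝ≥0∞ :=
  ((H : ℝ≥0∞) + 1) / 2 * ∑ h, ∫⁻ p, (‖p.1 - p.2‖₊ : ℝ≥0∞) ^ 2 ∂(μ h)

section AuxStmt7
open ProbabilityTheory
open scoped NNReal

variable {E : Type*} [NormedAddCommGroup E] [MeasurableSpace E] [BorelSpace E]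
  [SecondCountableTopology E] [PolishSpace E] [Nonempty E]

omit [PolishSpace E] [Nonempty E] in
lemma stmt7_cost_meas : Measurable fun p : E × E => (‖p.1 - p.2‖₊ : ℝ≥0∞) ^ 2 :=
  ((measurable_fst.sub measurable_snd).nnnorm.coe_nnreal_ennreal).pow_const 2

omit [NormedAddCommGroup E] [BorelSpace E] [SecondCountableTopology E] [PolishSpace E] in
/-- Gluing of two couplings along the common marginal. -/
lemma stmt7_glue_coupling [StandardBorelSpace E]
    (γ ν : Measure (E × E)) [IsProbabilityMeasure γ] [IsProbabilityMeasure ν]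
    (hmatch : γ.map Prod.snd = ν.map Prod.fst) :
    ∃ ρ : Measure (E × E × E), IsProbabilityMeasure ρ ∧
      ρ.map (fun p => (p.1, p.2.1)) = γ ∧ ρ.map Prod.snd = ν := by
  set κ : Kernel E E := ν.condKernel with hκ
  set κ' : Kernel (E × E) E := κ.comap Prod.snd measurable_snd with hκ'
  have hmap : Measurable (fun q : (E × E) × E => (q.1.1, q.1.2, q.2)) :=
    (measurable_fst.fst).prodMk ((measurable_fst.snd).prodMk measurable_snd)
  refine ⟨((γ ⊗ₘ κ').map (fun q => (q.1.1, q.1.2, q.2))), ?_, ?_, ?_⟩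
  · exact Measure.isProbabilityMeasure_map hmap.aemeasurable
  · rw [Measure.map_map (measurable_fst.prodMk measurable_snd.fst) hmap]
    have : ((fun p : E × E × E => (p.1, p.2.1)) ∘ fun q : (E × E) × E => (q.1.1, q.1.2, q.2))
        = Prod.fst := rfl
    rw [this]
    have := Measure.fst_compProd γ κ'
    rwa [Measure.fst] at this
  · rw [Measure.map_map measurable_snd hmap]
    have hcomp : (Prod.snd ∘ fun q : (E × E) × E => (q.1.1, q.1.2, q.2))
        = fun q : (E × E) × E => (q.1.2, q.2) := rfl
    rw [hcomp]
    ext s hs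
    have hg : Measurable fun q : (E × E) × E => (q.1.2, q.2) :=
      measurable_fst.snd.prodMk measurable_snd
    rw [Measure.map_apply hg hs, Measure.compProd_apply (hg hs)]
    have h1 : ∀ p : E × E, κ' p (Prod.mk p ⁻¹' ((fun q : (E × E) × E => (q.1.2, q.2)) ⁻¹' s))
        = κ p.2 (Prod.mk p.2 ⁻¹' s) := by
      intro p; rfl
    simp_rw [h1]
    rw [← lintegral_map (Kernel.measurable_kernel_prodMk_left hs) measurable_snd, hmatch]
    have h2 : ν.map Prod.fst = ν.fst := rfl
    rw [h2, ← Measure.compProd_apply hs, ν.disintegrate ν.condKernel]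

omit [MeasurableSpace E] [BorelSpace E] [SecondCountableTopology E] [PolishSpace E] [Nonempty E] in
lemma stmt7_pt_ineq (x y z : E) (t : ℝ≥0) (ht : 0 < t) :
    ((‖x - z‖₊ : ℝ≥0∞)) ^ 2 ≤ (1 + (t : ℝ≥0∞)⁻¹) * (‖x - y‖₊ : ℝ≥0∞) ^ 2
      + (1 + (t : ℝ≥0∞)) * (‖y - z‖₊ : ℝ≥0∞) ^ 2 := by
  rw [← ENNReal.coe_inv ht.ne']
  have : ((1 : ℝ≥0∞) + (t⁻¹ : ℝ≥0)) * (‖x - y‖₊ : ℝ≥0∞) ^ 2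
      + (1 + (t : ℝ≥0∞)) * (‖y - z‖₊ : ℝ≥0∞) ^ 2
      = (((1 + t⁻¹) * ‖x - y‖₊ ^ 2 + (1 + t) * ‖y - z‖₊ ^ 2 : ℝ≥0) : ℝ≥0∞) := by
    push_cast; ring
  rw [this, ← ENNReal.coe_pow, ENNReal.coe_le_coe, ← NNReal.coe_le_coe]
  push_cast
  set A := ‖x - y‖ with hA
  set B := ‖y - z‖ with hB
  set C := ‖x - z‖ with hC
  set T := (t : ℝ) with hT
  have hc : C ≤ A + B := by
    calc C = ‖(x - y) + (y - z)‖ := by rw [sub_add_sub_cancel]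
    _ ≤ A + B := norm_add_le _ _
  have hA0 : 0 ≤ A := norm_nonneg _
  have hB0 : 0 ≤ B := norm_nonneg _
  have hC0 : 0 ≤ C := norm_nonneg _
  have hT0 : 0 < T := ht
  have h1 : 0 ≤ T⁻¹ * (A - T * B) ^ 2 := mul_nonneg (inv_nonneg.2 hT0.le) (sq_nonneg _)
  have h2 : T⁻¹ * (A - T * B) ^ 2 = T⁻¹ * A ^ 2 - 2 * A * B + T * B ^ 2 := by
    field_simp
    ring
  have h3 : 0 ≤ T⁻¹ * A ^ 2 - 2 * A * B + T * B ^ 2 := h2 ▸ h1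
  have hC2 : C ^ 2 ≤ (A + B) ^ 2 := by nlinarith
  nlinarith

lemma stmt7_step_coupling (γ ν : Measure (E × E)) [IsProbabilityMeasure γ]
    [IsProbabilityMeasure ν]
    (hmatch : γ.map Prod.snd = ν.map Prod.fst) (t : ℝ≥0) (ht : 0 < t) :
    ∃ γ' : Measure (E × E), IsProbabilityMeasure γ' ∧
      γ'.map Prod.fst = γ.map Prod.fst ∧ γ'.map Prod.snd = ν.map Prod.snd ∧
      ∫⁻ p, (‖p.1 - p.2‖₊ : ℝ≥0∞) ^ 2 ∂γ' ≤
        (1 + (t : ℝ≥0∞)⁻¹) * ∫⁻ p, (‖p.1 - p.2‖₊ : ℝ≥0∞) ^ 2 ∂γ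
        + (1 + (t : ℝ≥0∞)) * ∫⁻ p, (‖p.1 - p.2‖₊ : ℝ≥0∞) ^ 2 ∂ν := by
  obtain ⟨ρ, hρ, hρ1, hρ2⟩ := stmt7_glue_coupling γ ν hmatch
  have hm13 : Measurable fun p : E × E × E => (p.1, p.2.2) :=
    measurable_fst.prodMk measurable_snd.snd
  have hm12 : Measurable fun p : E × E × E => (p.1, p.2.1) :=
    measurable_fst.prodMk measurable_snd.fst
  refine ⟨ρ.map (fun p => (p.1, p.2.2)), Measure.isProbabilityMeasure_map hm13.aemeasurable, ?_, ?_, ?_⟩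
  · rw [Measure.map_map measurable_fst hm13, ← hρ1,
      Measure.map_map measurable_fst hm12]
    rfl
  · rw [Measure.map_map measurable_snd hm13, ← hρ2,
      Measure.map_map measurable_snd measurable_snd]
    rfl
  · rw [lintegral_map stmt7_cost_meas hm13]
    have hb : ∫⁻ p : E × E × E, (‖p.1 - p.2.2‖₊ : ℝ≥0∞) ^ 2 ∂ρ ≤
        ∫⁻ p : E × E × E, ((1 + (t : ℝ≥0∞)⁻¹) * (‖p.1 - p.2.1‖₊ : ℝ≥0∞) ^ 2
          + (1 + (t : ℝ≥0∞)) * (‖p.2.1 - p.2.2‖₊ : ℝ≥0∞) ^ 2) ∂ρ :=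
      lintegral_mono fun p => stmt7_pt_ineq p.1 p.2.1 p.2.2 t ht
    refine le_trans (le_trans (le_of_eq ?_) hb) (le_of_eq ?_)
    · rfl
    have hmA : Measurable fun p : E × E × E => (‖p.1 - p.2.1‖₊ : ℝ≥0∞) ^ 2 :=
      ((measurable_fst.sub measurable_snd.fst).nnnorm.coe_nnreal_ennreal).pow_const 2
    have hmB : Measurable fun p : E × E × E => (‖p.2.1 - p.2.2‖₊ : ℝ≥0∞) ^ 2 :=
      ((measurable_snd.fst.sub measurable_snd.snd).nnnorm.coe_nnreal_ennreal).pow_const 2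
    rw [lintegral_add_left (hmA.const_mul _), lintegral_const_mul _ hmA,
      lintegral_const_mul _ hmB]
    congr 1
    · congr 1
      rw [← hρ1, lintegral_map stmt7_cost_meas hm12]
    · congr 1
      rw [← hρ2, lintegral_map stmt7_cost_meas measurable_snd]

end AuxStmt7

/-- the occupancy measures `μ⋆_h = (π̄⋆_{h−1}, π̄⋆_h)_# μsrc` of an optimal
feasible policy form a feasible family for the dynamic primal LP with cost `W₂²(μsrc, μtgt)`,
hence an optimal solution. -/
theorem stmt7 {d : ℕ} (hd : 1 ≤ d) (H : ℕ)
    (μsrc μtgt : Measure (EuclideanSpace ℝ (Fin d)))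
    [IsProbabilityMeasure μsrc] [IsProbabilityMeasure μtgt]
    (h2src : ∫⁻ x, (‖x‖₊ : ℝ≥0∞) ^ 2 ∂μsrc ≠ ⊤)
    (h2tgt : ∫⁻ x, (‖x‖₊ : ℝ≥0∞) ^ 2 ∂μtgt ≠ ⊤)
    (π : ℕ → EuclideanSpace ℝ (Fin d) → EuclideanSpace ℝ (Fin d))
    (hmeas : ∀ h ≤ H, Measurable (π h))
    (hfeas : μsrc.map (trajComp π (H + 1)) = μtgt)
    (hopt : ((H : ℝ≥0∞) + 1) / 2 *
        ∑ h ∈ Finset.range (H + 1),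
          ∫⁻ x, (‖trajComp π (h + 1) x - trajComp π h x‖₊ : ℝ≥0∞) ^ 2 ∂μsrc =
      W2sq μsrc μtgt)
    (μstar : Fin (H + 1) → Measure (EuclideanSpace ℝ (Fin d) × EuclideanSpace ℝ (Fin d)))
    (hμstar : ∀ h : Fin (H + 1), μstar h =
      μsrc.map (fun x => (trajComp π h.val x, trajComp π (h.val + 1) x))) :
    LPfeasible H μsrc μtgt μstar ∧
    LPcost H μstar = W2sq μsrc μtgt ∧
    ∀ ν, LPfeasible H μsrc μtgt ν → LPcost H μstar ≤ LPcost H ν := by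
  -- measurability of the partial compositions
  have Tm : ∀ h, h ≤ H + 1 → Measurable (trajComp π h) := by
    intro h
    induction h with
    | zero => intro _; exact measurable_id
    | succ n ih =>
      intro hn
      rw [show trajComp π (n + 1) = π n ∘ trajComp π n from rfl]
      exact (hmeas n (by omega)).comp (ih (by omega))
  have pairMeas : ∀ h : ℕ, h ≤ H → Measurable fun x => (trajComp π h x, trajComp π (h + 1) x) :=
    fun h hh => (Tm h (by omega)).prodMk (Tm (h + 1) (by omega))
  have hfst : ∀ h : Fin (H + 1), (μstar h).map Prod.fst = μsrc.map (trajComp π h.val) := by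
    intro h
    rw [hμstar h, Measure.map_map measurable_fst (pairMeas h.val (Nat.lt_succ_iff.mp h.isLt))]
    rfl
  have hsnd : ∀ h : Fin (H + 1), (μstar h).map Prod.snd = μsrc.map (trajComp π (h.val + 1)) := by
    intro h
    rw [hμstar h, Measure.map_map measurable_snd (pairMeas h.val (Nat.lt_succ_iff.mp h.isLt))]
    rfl
  have hfeasible : LPfeasible H μsrc μtgt μstar := by
    refine ⟨?_, ?_, ?_, ?_⟩
    · intro h
      rw [hμstar h]
      exact Measure.isProbabilityMeasure_map
        ((pairMeas h.val (Nat.lt_succ_iff.mp h.isLt)).aemeasurable)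
    · rw [hfst 0]
      have : (0 : Fin (H + 1)).val = 0 := rfl
      rw [this]
      exact Measure.map_id
    · intro h
      rw [hsnd h.castSucc, hfst h.succ, Fin.coe_castSucc, Fin.val_succ]
    · rw [hsnd (Fin.last H), Fin.val_last]
      exact hfeas
  -- cost of μstar
  have hcost : ∀ h : Fin (H + 1), ∫⁻ p : EuclideanSpace ℝ (Fin d) × EuclideanSpace ℝ (Fin d), (‖p.1 - p.2‖₊ : ℝ≥0∞) ^ 2 ∂(μstar h)
      = ∫⁻ x, (‖trajComp π (h.val + 1) x - trajComp π h.val x‖₊ : ℝ≥0∞) ^ 2 ∂μsrc := by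
    intro h
    rw [hμstar h, lintegral_map stmt7_cost_meas (pairMeas h.val (Nat.lt_succ_iff.mp h.isLt))]
    refine lintegral_congr fun x => ?_
    rw [show trajComp π (↑h) x - trajComp π (↑h + 1) x
        = -(trajComp π (↑h + 1) x - trajComp π (↑h) x) by abel, nnnorm_neg]
  have hsumstar : ∑ h : Fin (H + 1), ∫⁻ p : EuclideanSpace ℝ (Fin d) × EuclideanSpace ℝ (Fin d), (‖p.1 - p.2‖₊ : ℝ≥0∞) ^ 2 ∂(μstar h)
      = ∑ h ∈ Finset.range (H + 1),
          ∫⁻ x, (‖trajComp π (h + 1) x - trajComp π h x‖₊ : ℝ≥0∞) ^ 2 ∂μsrc := by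
    rw [← Fin.sum_univ_eq_sum_range
      (fun k => ∫⁻ x, (‖trajComp π (k + 1) x - trajComp π k x‖₊ : ℝ≥0∞) ^ 2 ∂μsrc) (H + 1)]
    exact Finset.sum_congr rfl fun h _ => hcost h
  have hcostEq : LPcost H μstar = W2sq μsrc μtgt := by
    rw [LPcost, hsumstar]
    exact hopt
  refine ⟨hfeasible, hcostEq, ?_⟩
  -- optimality
  intro ν hν
  obtain ⟨hp, h0, hchain, hlast⟩ := hν
  set c : ℕ → ℝ≥0∞ := fun k =>
    if hk : k < H + 1 then ∫⁻ p : EuclideanSpace ℝ (Fin d) × EuclideanSpace ℝ (Fin d), (‖p.1 - p.2‖₊ : ℝ≥0∞) ^ 2 ∂(ν ⟨k, hk⟩) else 0 with hc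
  have key : ∀ h : ℕ, ∀ hh : h < H + 1, ∃ γ : Measure (EuclideanSpace ℝ (Fin d) × EuclideanSpace ℝ (Fin d)), IsProbabilityMeasure γ ∧
      γ.map Prod.fst = μsrc ∧ γ.map Prod.snd = (ν ⟨h, hh⟩).map Prod.snd ∧
      ∫⁻ p : EuclideanSpace ℝ (Fin d) × EuclideanSpace ℝ (Fin d), (‖p.1 - p.2‖₊ : ℝ≥0∞) ^ 2 ∂γ ≤
        ((h : ℝ≥0∞) + 1) * ∑ k ∈ Finset.range (h + 1), c k := by
    intro h
    induction h with
    | zero =>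
      intro hh
      have h00 : (⟨0, hh⟩ : Fin (H + 1)) = 0 := by ext; simp
      refine ⟨ν ⟨0, hh⟩, hp _, ?_, rfl, ?_⟩
      · rw [h00]; exact h0
      · rw [Finset.sum_range_one]
        have : c 0 = ∫⁻ p : EuclideanSpace ℝ (Fin d) × EuclideanSpace ℝ (Fin d), (‖p.1 - p.2‖₊ : ℝ≥0∞) ^ 2 ∂(ν ⟨0, hh⟩) := by
          rw [hc]; simp only; rw [dif_pos hh]
        rw [this, Nat.cast_zero, zero_add, one_mul]
    | succ n ih =>
      intro hh
      have hn : n < H + 1 := by omega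
      obtain ⟨γ, hγp, hγ1, hγ2, hγc⟩ := ih hn
      haveI := hγp
      haveI := hp ⟨n + 1, hh⟩
      have hmatch : γ.map Prod.snd = (ν ⟨n + 1, hh⟩).map Prod.fst := by
        rw [hγ2]
        have e1 : (⟨n, hn⟩ : Fin (H + 1)) = Fin.castSucc ⟨n, by omega⟩ := by ext; simp
        have e2 : (⟨n + 1, hh⟩ : Fin (H + 1)) = Fin.succ ⟨n, by omega⟩ := by ext; simp
        rw [e1, e2]
        exact hchain _
      obtain ⟨γ', h1, h2, h3, h4⟩ :=
        stmt7_step_coupling γ (ν ⟨n + 1, hh⟩) hmatch ((n : NNReal) + 1) (by positivity)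
      refine ⟨γ', h1, by rw [h2, hγ1], by rw [h3], ?_⟩
      set N : ℝ≥0∞ := (n : ℝ≥0∞) with hN
      have hco : (((n : NNReal) + 1 : NNReal) : ℝ≥0∞) = N + 1 := by push_cast; rfl
      rw [hco] at h4
      have hcn1 : c (n + 1) = ∫⁻ p : EuclideanSpace ℝ (Fin d) × EuclideanSpace ℝ (Fin d), (‖p.1 - p.2‖₊ : ℝ≥0∞) ^ 2 ∂(ν ⟨n + 1, hh⟩) := by
        rw [hc]; simp only; rw [dif_pos hh]
      have hNe0 : N + 1 ≠ 0 := by simp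
      have hNtop : N + 1 ≠ ⊤ := by
        rw [hN]; exact ENNReal.add_ne_top.mpr ⟨ENNReal.natCast_ne_top n, one_ne_top⟩
      have halg : (1 + (N + 1)⁻¹) * (N + 1) = N + 1 + 1 := by
        rw [add_mul, one_mul, ENNReal.inv_mul_cancel hNe0 hNtop]
      calc ∫⁻ p : EuclideanSpace ℝ (Fin d) × EuclideanSpace ℝ (Fin d), (‖p.1 - p.2‖₊ : ℝ≥0∞) ^ 2 ∂γ'
          ≤ (1 + (N + 1)⁻¹) * ∫⁻ p : EuclideanSpace ℝ (Fin d) × EuclideanSpace ℝ (Fin d), (‖p.1 - p.2‖₊ : ℝ≥0∞) ^ 2 ∂γ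
            + (1 + (N + 1)) * ∫⁻ p : EuclideanSpace ℝ (Fin d) × EuclideanSpace ℝ (Fin d), (‖p.1 - p.2‖₊ : ℝ≥0∞) ^ 2 ∂(ν ⟨n + 1, hh⟩) := h4
        _ ≤ (1 + (N + 1)⁻¹) * ((N + 1) * ∑ k ∈ Finset.range (n + 1), c k)
            + (1 + (N + 1)) * c (n + 1) := by
            rw [hcn1]
            exact add_le_add (mul_le_mul_right hγc _) le_rfl
        _ = (N + 1 + 1) * ∑ k ∈ Finset.range (n + 1), c k + (N + 1 + 1) * c (n + 1) := by
            rw [← mul_assoc, halg, add_comm 1 (N + 1)]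
        _ = (N + 1 + 1) * ∑ k ∈ Finset.range (n + 2), c k := by
            rw [Finset.sum_range_succ (f := c) (n := n + 1), mul_add]
        _ = ((↑(n + 1) : ℝ≥0∞) + 1) * ∑ k ∈ Finset.range (n + 1 + 1), c k := by
            rw [hN]; push_cast; ring
  obtain ⟨γ, hγp, hγ1, hγ2, hγc⟩ := key H (by omega)
  have hγ2' : γ.map Prod.snd = μtgt := by
    rw [hγ2]
    have : (⟨H, by omega⟩ : Fin (H + 1)) = Fin.last H := by ext; simp
    rw [this]
    exact hlast
  have hW : W2sq μsrc μtgt ≤ 2⁻¹ * ∫⁻ p : EuclideanSpace ℝ (Fin d) × EuclideanSpace ℝ (Fin d), (‖p.1 - p.2‖₊ : ℝ≥0∞) ^ 2 ∂γ := by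
    rw [W2sq]
    exact iInf₂_le γ ⟨hγp, hγ1, hγ2'⟩
  have hsumν : ∑ h : Fin (H + 1), ∫⁻ p : EuclideanSpace ℝ (Fin d) × EuclideanSpace ℝ (Fin d), (‖p.1 - p.2‖₊ : ℝ≥0∞) ^ 2 ∂(ν h)
      = ∑ k ∈ Finset.range (H + 1), c k := by
    rw [← Fin.sum_univ_eq_sum_range c (H + 1)]
    refine Finset.sum_congr rfl fun i _ => ?_
    rw [hc]; simp only; rw [dif_pos i.isLt]
  rw [hcostEq, LPcost, hsumν]
  refine hW.trans ?_
  calc 2⁻¹ * ∫⁻ p : EuclideanSpace ℝ (Fin d) × EuclideanSpace ℝ (Fin d), (‖p.1 - p.2‖₊ : ℝ≥0∞) ^ 2 ∂γ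
      ≤ 2⁻¹ * (((H : ℝ≥0∞) + 1) * ∑ k ∈ Finset.range (H + 1), c k) :=
        mul_le_mul_right hγc _
    _ = ((H : ℝ≥0∞) + 1) / 2 * ∑ k ∈ Finset.range (H + 1), c k := by
        rw [ENNReal.div_eq_inv_mul]; ring
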